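/- Let G be a finite simple graph containing at least one isolated vertex. Then a 2-element subset {i,j} of the vertex set is counted by ℓ(G) if and only if N_G(i) = N_G(j); consequently ℓ(G) = j(G) + C(i(G), 2), where C(m,2) = m(m−1)/2 is the binomial coefficient. -/

import Mathlib

open Classical Finset

noncomputable section

/-- The mutation `μ_v(G)` of a graph `G` at a vertex `v`: edges not incident to `v`
are those of `G`; edges incident to `v` are the pairs `vw` with `w ≠ v`, `w ∉ N_G(v)`. -/
def mutation {V : Type*} (G : SimpleGraph V) (v : V) : SimpleGraph V where
  Adj x y := x ≠ y ∧
    ((x = v ∧ ¬ G.Adj v y) ∨ (y = v ∧ ¬ G.Adj v x) ∨ (x ≠ v ∧ y ≠ v ∧ G.Adj x y))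
  symm := by
    refine ⟨?_⟩
    rintro x y ⟨hxy, h | h | ⟨h1, h2, h3⟩⟩
    · exact ⟨hxy.symm, Or.inr (Or.inl h)⟩
    · exact ⟨hxy.symm, Or.inl h⟩
    · exact ⟨hxy.symm, Or.inr (Or.inr ⟨h2, h1, h3.symm⟩)⟩
  loopless := by
    refine ⟨?_⟩
    rintro x ⟨hxx, -⟩
    exact hxx rfl

/-- The relative mutation `μ_{v←u}(G)` of `G` at `v` with respect to `u`: edges not
incident to `v` are those of `G`; edges incident to `v` are the pairs `vw` with
`w ≠ v` and `w` in the symmetric difference `N_G(u) Δ N_G(v)`. -/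
def relMutation {V : Type*} (G : SimpleGraph V) (v u : V) : SimpleGraph V where
  Adj x y := x ≠ y ∧
    ((x = v ∧ (G.Adj u y ↔ ¬ G.Adj v y)) ∨ (y = v ∧ (G.Adj u x ↔ ¬ G.Adj v x)) ∨
      (x ≠ v ∧ y ≠ v ∧ G.Adj x y))
  symm := by
    refine ⟨?_⟩
    rintro x y ⟨hxy, h | h | ⟨h1, h2, h3⟩⟩
    · exact ⟨hxy.symm, Or.inr (Or.inl h)⟩
    · exact ⟨hxy.symm, Or.inl h⟩
    · exact ⟨hxy.symm, Or.inr (Or.inr ⟨h2, h1, h3.symm⟩)⟩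
  loopless := by
    refine ⟨?_⟩
    rintro x ⟨hxx, -⟩
    exact hxx rfl

/-- A vertex is isolated if it has no neighbors. -/
def isIsolated {V : Type*} (G : SimpleGraph V) (v : V) : Prop := ∀ w, ¬ G.Adj v w

/-- `pairGraph a b` is the graph `G(a,b)` on `2a+b` vertices consisting of `a`
pairwise disjoint edges `{0,1}, {2,3}, …` together with `b` isolated vertices. -/
def pairGraph (a b : ℕ) : SimpleGraph (Fin (2 * a + b)) where
  Adj x y := x ≠ y ∧ (x : ℕ) / 2 = (y : ℕ) / 2 ∧ (x : ℕ) < 2 * a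
  symm := by
    refine ⟨?_⟩
    rintro x y ⟨h1, h2, h3⟩
    exact ⟨h1.symm, h2.symm, by omega⟩
  loopless := by
    refine ⟨?_⟩
    rintro x ⟨hxx, -⟩
    exact hxx rfl

/-- The adjacency matrix `M(G)` of `G`, over `F_2`. -/
def adjMat {n : ℕ} (G : SimpleGraph (Fin n)) : Matrix (Fin n) (Fin n) (ZMod 2) :=
  fun i j => if G.Adj i j then 1 else 0

/-- The matrix `X(G)` over `F_2`: upper-left `n×n` block is `M(G)`, and the last row
and column consist entirely of `1`'s except for the `(n+1, n+1)` entry, which is `0`. -/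
def Xmat {n : ℕ} (G : SimpleGraph (Fin n)) :
    Matrix (Fin (n + 1)) (Fin (n + 1)) (ZMod 2) :=
  fun i j =>
    if hi : (i : ℕ) < n then
      if hj : (j : ℕ) < n then adjMat G ⟨i, hi⟩ ⟨j, hj⟩ else 1
    else if (j : ℕ) < n then 1 else 0

/-- Finite simple graphs on vertex sets `{1, …, n}`, bundled with `n`. -/
abbrev GraphOn := Σ n : ℕ, SimpleGraph (Fin n)

/-- One move: either pass to an isomorphic graph, or apply a mutation `μ_v`, or apply a
relative mutation `μ_{v←w}` to a graph containing an isolated vertex `u ∉ {v, w}`. -/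
inductive MoveStep : GraphOn → GraphOn → Prop
  | iso {n m : ℕ} (G : SimpleGraph (Fin n)) (H : SimpleGraph (Fin m)) :
      Nonempty (G ≃g H) → MoveStep ⟨n, G⟩ ⟨m, H⟩
  | mut {n : ℕ} (G : SimpleGraph (Fin n)) (v : Fin n) :
      MoveStep ⟨n, G⟩ ⟨n, mutation G v⟩
  | relMut {n : ℕ} (G : SimpleGraph (Fin n)) (v w u : Fin n) :
      v ≠ w → u ≠ v → u ≠ w → isIsolated G u →
      MoveStep ⟨n, G⟩ ⟨n, relMutation G v w⟩

/-- `G ≈ G'`: `G'` is obtained from `G`, up to graph isomorphism, by a finite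
sequence of mutations and relative mutations (the latter in the presence of an
isolated vertex distinct from the two vertices involved). -/
def graphEquiv (A B : GraphOn) : Prop := Relation.ReflTransGen MoveStep A B

/-- The induced subgraph of `G` on `{i, j, k}` has an even number of edges. -/
def evenTriple {V : Type*} (G : SimpleGraph V) (i j k : V) : Prop :=
  Even ((if G.Adj i j then 1 else 0) + (if G.Adj i k then 1 else 0) +
    (if G.Adj j k then 1 else 0) : ℕ)

/-- `ℓ(G)`: the number of 2-element subsets `{i, j}` (encoded as pairs `i < j`) such
that for every vertex `k ∉ {i, j}` the induced subgraph of `G` on `{i, j, k}` has an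
even number of edges. -/
def ell {n : ℕ} (G : SimpleGraph (Fin n)) : ℕ :=
  ((univ : Finset (Fin n × Fin n)).filter
    (fun p => p.1 < p.2 ∧ ∀ k, k ≠ p.1 → k ≠ p.2 → evenTriple G p.1 p.2 k)).card

/-- `J(G)`: the set of 2-element subsets `{i, j}` (encoded as pairs `i < j`) with
`N_G(i) = N_G(j) ≠ ∅`. -/
def Jfinset {n : ℕ} (G : SimpleGraph (Fin n)) : Finset (Fin n × Fin n) :=
  (univ : Finset (Fin n × Fin n)).filter
    (fun p => p.1 < p.2 ∧ G.neighborSet p.1 = G.neighborSet p.2 ∧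
      G.neighborSet p.1 ≠ ∅)

/-- `j(G) = #J(G)`. -/
def jnum {n : ℕ} (G : SimpleGraph (Fin n)) : ℕ := (Jfinset G).card

/-- `i(G)`: the number of isolated vertices of `G`. -/
def numIso {n : ℕ} (G : SimpleGraph (Fin n)) : ℕ :=
  ((univ : Finset (Fin n)).filter (fun v => isIsolated G v)).card

end

lemma card_lt_pairs {α : Type*} [LinearOrder α] [DecidableEq α] (s : Finset α) :
    ((s ×ˢ s).filter (fun p => p.1 < p.2)).card = s.card.choose 2 := by
  classical
  have hb : ((s ×ˢ s).filter (fun p => p.1 < p.2)).card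
      = ((s ×ˢ s).filter (fun p => p.2 < p.1)).card := by
    apply Finset.card_bij (fun p _ => p.swap)
    · intro p hp
      simp only [Finset.mem_filter, Finset.mem_product] at hp ⊢
      exact ⟨⟨hp.1.2, hp.1.1⟩, hp.2⟩
    · intro p _ q _ h
      exact Prod.swap_injective h
    · intro p hp
      simp only [Finset.mem_filter, Finset.mem_product] at hp
      exact ⟨p.swap, by simp only [Finset.mem_filter, Finset.mem_product]; exact ⟨⟨hp.1.2, hp.1.1⟩, hp.2⟩, by simp⟩
  have hoff : s.offDiag = ((s ×ˢ s).filter fun p => p.1 < p.2) ∪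
      ((s ×ˢ s).filter fun p => p.2 < p.1) := by
    ext p
    simp only [Finset.mem_offDiag, Finset.mem_union, Finset.mem_filter, Finset.mem_product]
    constructor
    · rintro ⟨h1, h2, h3⟩
      rcases lt_or_gt_of_ne h3 with h | h
      · exact Or.inl ⟨⟨h1, h2⟩, h⟩
      · exact Or.inr ⟨⟨h1, h2⟩, h⟩
    · rintro (⟨⟨h1, h2⟩, h3⟩ | ⟨⟨h1, h2⟩, h3⟩)
      · exact ⟨h1, h2, ne_of_lt h3⟩
      · exact ⟨h1, h2, (ne_of_lt h3).symm⟩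
  have hdisj : Disjoint ((s ×ˢ s).filter fun p => p.1 < p.2)
      ((s ×ˢ s).filter fun p => p.2 < p.1) := by
    rw [Finset.disjoint_left]
    intro p hp hq
    simp only [Finset.mem_filter] at hp hq
    exact lt_asymm hp.2 hq.2
  have hcard := Finset.offDiag_card s
  rw [hoff, Finset.card_union_of_disjoint hdisj, ← hb] at hcard
  rw [Nat.choose_two_right]
  have hmul : s.card * s.card - s.card = s.card * (s.card - 1) := by
    cases s.card with
    | zero => rfl
    | succ m => simp [Nat.mul_sub, Nat.succ_sub_one, Nat.mul_succ]
  rw [hmul] at hcard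
  omega

/-- if `G` contains an isolated vertex, then a 2-element subset `{i, j}`
is counted by `ℓ(G)` iff `N_G(i) = N_G(j)`; consequently `ℓ(G) = j(G) + C(i(G), 2)`. -/
theorem stmt_15 {n : ℕ} (G : SimpleGraph (Fin n)) (hiso : ∃ u, isIsolated G u) :
    (∀ i j : Fin n, i ≠ j →
      ((∀ k, k ≠ i → k ≠ j → evenTriple G i j k) ↔
        G.neighborSet i = G.neighborSet j)) ∧
    ell G = jnum G + Nat.choose (numIso G) 2 := by
  classical
  obtain ⟨u, hu⟩ := hiso
  have key : ∀ i j : Fin n, i ≠ j →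
      ((∀ k, k ≠ i → k ≠ j → evenTriple G i j k) ↔
        G.neighborSet i = G.neighborSet j) := by
    intro i j hij
    constructor
    · intro h
      have hnadj : ¬ G.Adj i j := by
        by_cases hui : u = i
        · subst hui; exact fun a => hu j a
        · by_cases huj : u = j
          · subst huj; exact fun a => hu i a.symm
          · have ht := h u hui huj
            have h2 : ¬ G.Adj i u := fun a => hu i a.symm
            have h3 : ¬ G.Adj j u := fun a => hu j a.symm
            by_cases h1 : G.Adj i j
            · simp [evenTriple, h1, h2, h3] at ht
            · exact h1
      ext w
      simp only [SimpleGraph.mem_neighborSet]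
      by_cases hwi : w = i
      · subst hwi
        simp only [SimpleGraph.irrefl, false_iff]
        exact fun a => hnadj a.symm
      · by_cases hwj : w = j
        · subst hwj
          simp only [SimpleGraph.irrefl, iff_false]
          exact hnadj
        · have ht := h w hwi hwj
          by_cases h2 : G.Adj i w <;> by_cases h3 : G.Adj j w <;>
            simp_all [evenTriple, Nat.even_iff]
    · intro hN k hki hkj
      have hnadj : ¬ G.Adj i j := by
        intro a
        have hj : j ∈ G.neighborSet i := a
        rw [hN] at hj
        exact G.loopless.irrefl j hj
      have hik : G.Adj i k ↔ G.Adj j k := by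
        constructor <;> intro a
        · have hk : k ∈ G.neighborSet i := a
          rwa [hN] at hk
        · have hk : k ∈ G.neighborSet j := a
          rwa [← hN] at hk
      by_cases h2 : G.Adj i k <;> simp_all [evenTriple, Nat.even_iff]
  refine ⟨key, ?_⟩
  have hisoN : ∀ v : Fin n, isIsolated G v ↔ G.neighborSet v = ∅ := by
    intro v
    rw [Set.eq_empty_iff_forall_notMem]
    rfl
  have hset : ell G = ((univ : Finset (Fin n × Fin n)).filter
      (fun p => p.1 < p.2 ∧ G.neighborSet p.1 = G.neighborSet p.2)).card := by
    unfold ell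
    congr 1
    apply Finset.filter_congr
    intro p _
    constructor
    · rintro ⟨h1, h2⟩; exact ⟨h1, (key p.1 p.2 h1.ne).1 h2⟩
    · rintro ⟨h1, h2⟩; exact ⟨h1, (key p.1 p.2 h1.ne).2 h2⟩
  set A := ((univ : Finset (Fin n × Fin n)).filter
      (fun p => p.1 < p.2 ∧ G.neighborSet p.1 = G.neighborSet p.2)) with hA
  have hsplit : (A.filter (fun p => G.neighborSet p.1 ≠ ∅)).card +
      (A.filter (fun p => ¬ G.neighborSet p.1 ≠ ∅)).card = A.card :=
    Finset.card_filter_add_card_filter_not _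
  have hJ : jnum G = (A.filter (fun p => G.neighborSet p.1 ≠ ∅)).card := by
    unfold jnum Jfinset
    rw [hA, Finset.filter_filter]
    congr 1
    apply Finset.filter_congr
    intro p _
    tauto
  have hI : (A.filter (fun p => ¬ G.neighborSet p.1 ≠ ∅)).card
      = Nat.choose (numIso G) 2 := by
    have heq : A.filter (fun p => ¬ G.neighborSet p.1 ≠ ∅) =
        (((univ : Finset (Fin n)).filter (fun v => isIsolated G v)) ×ˢ
         ((univ : Finset (Fin n)).filter (fun v => isIsolated G v))).filter
          (fun p => p.1 < p.2) := by
      ext p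
      rw [hA]
      simp only [Finset.mem_filter, Finset.mem_product, Finset.mem_univ, true_and,
        not_not, hisoN]
      constructor
      · rintro ⟨⟨h1, h2⟩, h3⟩
        exact ⟨⟨h3, h2 ▸ h3⟩, h1⟩
      · rintro ⟨⟨h1, h2⟩, h3⟩
        exact ⟨⟨h3, h1.trans h2.symm⟩, h1⟩
    rw [heq, card_lt_pairs]
    rfl
  rw [hset, ← hsplit, hJ, hI]
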